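/- arXiv:1102.4723 — 6 statements merged into one kernel-verified Lean document; each statement's English description precedes it below -/
import Mathlib

section
/- Let V be a finite-dimensional real inner product space and let A be a self-adjoint linear endomorphism of V. Then the endomorphism χ(A) := Ψ⁻(A) ∘ Ψ⁺(A)⁻¹ is self-adjoint (here Ψ⁺(A) is invertible because it is self-adjoint positive definite). -/
open scoped RealInnerProductSpace

/-- `Ψ⁺(A) := Σ_{n≥0} A^{2n}/(2n+1)!`, as a norm-convergent series of endomorphisms. -/
noncomputable def PsiPlus {V : Type*} [NormedAddCommGroup V] [NormedSpace ℝ V]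
    (A : V →L[ℝ] V) : V →L[ℝ] V :=
  ∑' n : ℕ, (((2 * n + 1).factorial : ℝ))⁻¹ • A ^ (2 * n)

/-- `Ψ⁻(A) := −Σ_{n≥0} A^{2n+1}/(2n+2)!`, as a norm-convergent series of endomorphisms. -/
noncomputable def PsiMinus {V : Type*} [NormedAddCommGroup V] [NormedSpace ℝ V]
    (A : V →L[ℝ] V) : V →L[ℝ] V :=
  -∑' n : ℕ, (((2 * n + 2).factorial : ℝ))⁻¹ • A ^ (2 * n + 1)

/-- `χ(A) := Ψ⁻(A) ∘ Ψ⁺(A)⁻¹`, where the inverse is taken in the ring of continuous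
endomorphisms (`Ψ⁺(A)` is invertible when `A` is self-adjoint, being positive definite). -/
noncomputable def chi {V : Type*} [NormedAddCommGroup V] [NormedSpace ℝ V]
    (A : V →L[ℝ] V) : V →L[ℝ] V :=
  PsiMinus A * Ring.inverse (PsiPlus A)


section aux
variable {V : Type*} [NormedAddCommGroup V] [NormedSpace ℝ V] [CompleteSpace V] (A : V →L[ℝ] V)

set_option maxHeartbeats 1000000 in
lemma aux_summable (k : ℕ) (c : ℕ → ℕ) (hc : ∀ n, 2 * n ≤ c n) :
    Summable (fun n : ℕ => (((c n).factorial : ℝ))⁻¹ • A ^ (2 * n + k)) := by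
  have hpow : ∀ m : ℕ, ‖A ^ m‖ ≤ ‖A‖ ^ m := fun m => by
    induction m with
    | zero => rw [pow_zero, pow_zero]; exact ContinuousLinearMap.norm_id_le
    | succ n ih =>
      calc ‖A ^ (n + 1)‖ = ‖A ^ n * A‖ := by rw [pow_succ]
        _ ≤ ‖A ^ n‖ * ‖A‖ := norm_mul_le _ _
        _ ≤ ‖A‖ ^ n * ‖A‖ := mul_le_mul_of_nonneg_right ih (norm_nonneg _)
        _ = ‖A‖ ^ (n + 1) := (pow_succ _ _).symm
  apply Summable.of_norm
  have h := (Real.summable_pow_div_factorial ‖A‖).comp_injective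
    (fun a b h => by simp only at h; omega : Function.Injective (fun n => 2 * n))
  apply Summable.of_nonneg_of_le (fun n => norm_nonneg _)
    (fun n => ?_) (h.mul_left (‖A‖ ^ k))
  simp only [Function.comp]
  calc ‖(((c n).factorial : ℝ))⁻¹ • A ^ (2 * n + k)‖
      ≤ ‖(((c n).factorial : ℝ))⁻¹‖ * ‖A ^ (2 * n + k)‖ :=
        norm_smul_le (β := V →L[ℝ] V) _ _
    _ ≤ (((2 * n).factorial : ℝ))⁻¹ * ‖A‖ ^ (2 * n + k) := by
        apply mul_le_mul _ (hpow _) (norm_nonneg _) (by positivity)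
        rw [Real.norm_eq_abs, abs_of_nonneg (by positivity)]
        exact inv_anti₀ (by positivity) (by exact_mod_cast Nat.factorial_le (hc n))
    _ = ‖A‖ ^ k * (‖A‖ ^ (2 * n) / (2 * n).factorial) := by rw [pow_add]; ring
end aux

lemma commute_tsum_right {R : Type*} [NormedRing R] [CompleteSpace R]
    {f : ℕ → R} (b : R) (hf : Summable f) (h : ∀ i, Commute b (f i)) :
    Commute b (∑' i, f i) := by
  unfold Commute SemiconjBy
  rw [← hf.tsum_mul_left b, ← hf.tsum_mul_right b]
  exact tsum_congr fun i => h i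

lemma commute_ringInverse {R : Type*} [MonoidWithZero R] {a b : R}
    (h : Commute a b) : Commute a (Ring.inverse b) := by
  by_cases hb : IsUnit b
  · obtain ⟨u, rfl⟩ := hb
    rw [Ring.inverse_unit]
    exact h.units_inv_right
  · rw [Ring.inverse_non_unit _ hb]
    exact Commute.zero_right a

set_option synthInstance.maxHeartbeats 1000000 in
set_option maxHeartbeats 1000000 in

/-- If `A` is a self-adjoint endomorphism of a finite-dimensional real inner product space,
then `χ(A) = Ψ⁻(A) ∘ Ψ⁺(A)⁻¹` is self-adjoint. -/
theorem chi_selfAdjoint {V : Type*} [NormedAddCommGroup V]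
    [InnerProductSpace ℝ V] [FiniteDimensional ℝ V] (A : V →L[ℝ] V)
    (hA : ∀ x y : V, ⟪A x, y⟫ = ⟪x, A y⟫) :
    ∀ x y : V, ⟪chi A x, y⟫ = ⟪x, chi A y⟫ := by
  have hAsa : IsSelfAdjoint A :=
    ContinuousLinearMap.isSelfAdjoint_iff_isSymmetric.mpr hA
  have hAstar : star A = A := hAsa
  have hsumP : Summable (fun n : ℕ => (((2 * n + 1).factorial : ℝ))⁻¹ • A ^ (2 * n)) := by
    simpa using aux_summable A 0 (fun n => 2 * n + 1) (fun n => by show 2*n ≤ 2*n+1; omega)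
  have hsumM : Summable (fun n : ℕ => (((2 * n + 2).factorial : ℝ))⁻¹ • A ^ (2 * n + 1)) :=
    aux_summable A 1 (fun n => 2 * n + 2) (fun n => by show 2*n ≤ 2*n+2; omega)
  have hstar : ∀ (c : ℝ) (m : ℕ), star (c • A ^ m) = c • A ^ m := by
    intro c m
    rw [star_smul, star_pow, hAstar, star_trivial]
  have hP : IsSelfAdjoint (PsiPlus A) := by
    show star _ = _
    unfold PsiPlus
    rw [tsum_star]
    exact tsum_congr fun n => hstar _ _
  have hM : IsSelfAdjoint (PsiMinus A) := by
    show star _ = _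
    unfold PsiMinus
    rw [star_neg, tsum_star]
    congr 1
    exact tsum_congr fun n => hstar _ _
  have hcommPow : ∀ (c d : ℝ) (m n : ℕ), Commute (c • A ^ m) (d • A ^ n) :=
    fun c d m n => ((Commute.pow_pow_self A m n).smul_left c).smul_right d
  have hcomm : Commute (PsiMinus A) (PsiPlus A) := by
    unfold PsiMinus PsiPlus
    refine Commute.neg_left ?_
    refine commute_tsum_right _ hsumP fun i => ?_
    exact (commute_tsum_right _ hsumM fun j => (hcommPow _ _ _ _)).symm
  have hchi : IsSelfAdjoint (chi A) := by
    show star _ = _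
    unfold chi
    rw [star_mul, ← Ring.inverse_star, hP.star_eq, hM.star_eq]
    exact ((commute_ringInverse hcomm).symm).eq
  exact ContinuousLinearMap.isSelfAdjoint_iff_isSymmetric.mp hchi
end

section
/- Let V be a finite-dimensional real inner product space and let A be a self-adjoint linear endomorphism of V. Then every eigenvalue of χ(A) := Ψ⁻(A) ∘ Ψ⁺(A)⁻¹ lies in the open interval (−1, 1): if χ(A) v = μ • v for some nonzero v ∈ V and μ ∈ ℝ, then −1 < μ < 1. -/
open scoped RealInnerProductSpace

noncomputable def pP (l : ℝ) : ℝ := if l = 0 then 1 else Real.sinh l / l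
noncomputable def pM (l : ℝ) : ℝ := if l = 0 then 0 else -((Real.cosh l - 1) / l)

lemma hasSum_pP (l : ℝ) :
    HasSum (fun n : ℕ => (((2 * n + 1).factorial : ℝ))⁻¹ * l ^ (2 * n)) (pP l) := by
  rcases eq_or_ne l 0 with rfl | hl
  · rw [pP, if_pos rfl]
    have h := hasSum_single (f := fun n : ℕ => (((2 * n + 1).factorial : ℝ))⁻¹ * (0:ℝ) ^ (2 * n))
      0 (by intro n hn; simp [zero_pow, Nat.mul_ne_zero two_ne_zero hn])
    simpa using h
  · rw [pP, if_neg hl]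
    have h : HasSum (fun n : ℕ => l ^ (2 * n + 1) / ((2 * n + 1).factorial : ℝ) / l)
        (Real.sinh l / l) := (Real.hasSum_sinh l).div_const l
    convert h using 2 with n
    rw [pow_succ]
    field_simp

lemma hasSum_pM (l : ℝ) :
    HasSum (fun n : ℕ => (((2 * n + 2).factorial : ℝ))⁻¹ * l ^ (2 * n + 1)) (-pM l) := by
  rcases eq_or_ne l 0 with rfl | hl
  · rw [pM, if_pos rfl, neg_zero]
    have : (fun n : ℕ => (((2 * n + 2).factorial : ℝ))⁻¹ * (0:ℝ) ^ (2 * n + 1))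
        = fun _ => (0:ℝ) := by
      funext n; simp
    rw [this]; exact hasSum_zero
  · rw [pM, if_neg hl, neg_neg]
    have h0 : HasSum (fun n : ℕ => l ^ (2 * (n + 1)) / ((2 * (n + 1)).factorial : ℝ))
        (Real.cosh l - 1) := by
      have := (hasSum_nat_add_iff' (f := fun n : ℕ => l ^ (2 * n) / ((2 * n).factorial : ℝ)) 1).2
        (Real.hasSum_cosh l)
      simpa using this
    have h : HasSum (fun n : ℕ => l ^ (2 * (n + 1)) / ((2 * (n + 1)).factorial : ℝ) / l)
        ((Real.cosh l - 1) / l) := h0.div_const l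
    convert h using 2 with n
    have : 2 * (n + 1) = 2 * n + 1 + 1 := by ring
    rw [this, pow_succ]
    field_simp
    ring_nf

lemma pP_pos (l : ℝ) : 0 < pP l := by
  rcases eq_or_ne l 0 with rfl | hl
  · rw [pP, if_pos rfl]; norm_num
  · rw [pP, if_neg hl]
    rcases hl.lt_or_gt with h | h
    · exact div_pos_iff.2 (Or.inr ⟨Real.sinh_neg_iff.2 h, h⟩)
    · exact div_pos (Real.sinh_pos_iff.2 h) h

lemma abs_pM_lt (l : ℝ) : |pM l| < pP l := by
  rcases eq_or_ne l 0 with rfl | hl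
  · rw [pP, if_pos rfl, pM, if_pos rfl]; norm_num
  · rw [pP, if_neg hl, pM, if_neg hl, abs_neg, abs_div]
    have hcosh : |Real.cosh l - 1| = Real.cosh |l| - 1 := by
      rw [abs_of_nonneg (by linarith [Real.one_le_cosh l]), Real.cosh_abs]
    have hl' : 0 < |l| := abs_pos.2 hl
    have hsinh : Real.sinh l / l = Real.sinh |l| / |l| := by
      rcases hl.lt_or_gt with h | h
      · rw [abs_of_neg h, Real.sinh_neg, neg_div_neg_eq]
      · rw [abs_of_pos h]
    rw [hcosh, hsinh, div_lt_div_iff_of_pos_right hl']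
    have h1 := Real.cosh_sub_sinh |l|
    have h2 : Real.exp (-|l|) < 1 := Real.exp_lt_one_iff.2 (by linarith)
    linarith

section Op
variable {V : Type*} [NormedAddCommGroup V] [NormedSpace ℝ V]

lemma norm_pow_le_clm (A : V →L[ℝ] V) : ∀ k : ℕ, ‖A ^ k‖ ≤ ‖A‖ ^ k
  | 0 => by
      simpa [ContinuousLinearMap.one_def] using ContinuousLinearMap.norm_id_le
  | (k + 1) => by
      rw [pow_succ, pow_succ]
      exact le_trans (norm_mul_le _ _)
        (mul_le_mul_of_nonneg_right (norm_pow_le_clm A k) (norm_nonneg A))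

lemma summableP [CompleteSpace V] (A : V →L[ℝ] V) :
    Summable (fun n : ℕ => (((2 * n + 1).factorial : ℝ))⁻¹ • A ^ (2 * n)) := by
  refine Summable.of_norm_bounded (g := fun n => ‖A‖ ^ (2 * n) / ((2 * n).factorial : ℝ)) ?_ ?_
  · exact (Real.summable_pow_div_factorial ‖A‖).comp_injective
      (fun a b h => by omega)
  · intro n
    refine le_trans (ContinuousLinearMap.opNorm_smul_le _ _) ?_
    simp only [norm_inv, Real.norm_natCast, div_eq_inv_mul]
    have h1 : (((2 * n + 1).factorial : ℝ))⁻¹ ≤ (((2 * n).factorial : ℝ))⁻¹ := by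
      apply inv_anti₀
      · positivity
      · exact_mod_cast Nat.factorial_le (by omega)
    exact mul_le_mul h1 (norm_pow_le_clm A _) (norm_nonneg _) (by positivity)

lemma summableM [CompleteSpace V] (A : V →L[ℝ] V) :
    Summable (fun n : ℕ => (((2 * n + 2).factorial : ℝ))⁻¹ • A ^ (2 * n + 1)) := by
  refine Summable.of_norm_bounded (g := fun n => ‖A‖ ^ (2 * n + 1) / ((2 * n + 1).factorial : ℝ)) ?_ ?_
  · exact (Real.summable_pow_div_factorial ‖A‖).comp_injective
      (fun a b h => by omega)
  · intro n
    refine le_trans (ContinuousLinearMap.opNorm_smul_le _ _) ?_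
    simp only [norm_inv, Real.norm_natCast, div_eq_inv_mul]
    have h1 : (((2 * n + 2).factorial : ℝ))⁻¹ ≤ (((2 * n + 1).factorial : ℝ))⁻¹ := by
      apply inv_anti₀
      · positivity
      · exact_mod_cast Nat.factorial_le (by omega)
    exact mul_le_mul h1 (norm_pow_le_clm A _) (norm_nonneg _) (by positivity)

lemma pow_apply_eig (A : V →L[ℝ] V) {l : ℝ} {x : V} (h : A x = l • x) :
    ∀ k : ℕ, (A ^ k) x = l ^ k • x
  | 0 => by simp [ContinuousLinearMap.one_def]
  | (k + 1) => by
      rw [pow_succ, ContinuousLinearMap.mul_apply, h, map_smul, pow_apply_eig A h k,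
        smul_smul, pow_succ]
      ring_nf

lemma PsiPlus_apply_eig [CompleteSpace V] (A : V →L[ℝ] V) {l : ℝ} {x : V}
    (h : A x = l • x) : PsiPlus A x = pP l • x := by
  have h1 := (ContinuousLinearMap.apply ℝ V x).hasSum (summableP A).hasSum
  simp only [ContinuousLinearMap.apply_apply] at h1
  rw [PsiPlus]
  have h2 : HasSum (fun n : ℕ => ((((2 * n + 1).factorial : ℝ))⁻¹ • A ^ (2 * n)) x)
      (pP l • x) := by
    have h3 := (hasSum_pP l).smul_const x
    have hfun : (fun n : ℕ => ((((2 * n + 1).factorial : ℝ))⁻¹ • A ^ (2 * n)) x)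
        = fun n : ℕ => ((((2 * n + 1).factorial : ℝ))⁻¹ * l ^ (2 * n)) • x := by
      funext n
      rw [ContinuousLinearMap.smul_apply, pow_apply_eig A h, smul_smul]
    rw [hfun]
    exact h3
  exact h1.unique h2

lemma PsiMinus_apply_eig [CompleteSpace V] (A : V →L[ℝ] V) {l : ℝ} {x : V}
    (h : A x = l • x) : PsiMinus A x = pM l • x := by
  have h1 := (ContinuousLinearMap.apply ℝ V x).hasSum (summableM A).hasSum
  simp only [ContinuousLinearMap.apply_apply] at h1
  have h2 : HasSum (fun n : ℕ => ((((2 * n + 2).factorial : ℝ))⁻¹ • A ^ (2 * n + 1)) x)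
      ((-pM l) • x) := by
    have h3 := (hasSum_pM l).smul_const x
    have hfun : (fun n : ℕ => ((((2 * n + 2).factorial : ℝ))⁻¹ • A ^ (2 * n + 1)) x)
        = fun n : ℕ => ((((2 * n + 2).factorial : ℝ))⁻¹ * l ^ (2 * n + 1)) • x := by
      funext n
      rw [ContinuousLinearMap.smul_apply, pow_apply_eig A h, smul_smul]
    rw [hfun]
    exact h3
  rw [PsiMinus, ContinuousLinearMap.neg_apply, h1.unique h2, neg_smul, neg_neg]

end Op

/-- Every eigenvalue of `χ(A) := Ψ⁻(A) ∘ Ψ⁺(A)⁻¹` lies in the open interval `(−1, 1)`,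
when `A` is a self-adjoint endomorphism of a finite-dimensional real inner product space. -/
theorem chi_eigenvalues_mem_Ioo {V : Type*} [NormedAddCommGroup V]
    [InnerProductSpace ℝ V] [FiniteDimensional ℝ V] (A : V →L[ℝ] V)
    (hA : ∀ x y : V, ⟪A x, y⟫ = ⟪x, A y⟫)
    (v : V) (hv : v ≠ 0) (μ : ℝ) (hμ : chi A v = μ • v) :
    -1 < μ ∧ μ < 1 := by
  have hT : (A : V →ₗ[ℝ] V).IsSymmetric := fun x y => hA x y
  have hn : Module.finrank ℝ V = Module.finrank ℝ V := rfl
  set b := hT.eigenvectorBasis hn with hb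
  set lam := hT.eigenvalues hn with hlam
  have heig : ∀ i, A (b i) = lam i • b i := by
    intro i
    exact_mod_cast hT.apply_eigenvectorBasis hn i
  have hP : ∀ i, PsiPlus A (b i) = pP (lam i) • b i :=
    fun i => PsiPlus_apply_eig A (heig i)
  have hM : ∀ i, PsiMinus A (b i) = pM (lam i) • b i :=
    fun i => PsiMinus_apply_eig A (heig i)
  let Q : V →L[ℝ] V :=
    LinearMap.toContinuousLinearMap
      (Module.Basis.constr b.toBasis ℝ (fun i => (pP (lam i))⁻¹ • b i))
  have hQ : ∀ i, Q (b i) = (pP (lam i))⁻¹ • b i := by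
    intro i
    show (Module.Basis.constr b.toBasis ℝ (fun i => (pP (lam i))⁻¹ • b i)) (b i) = _
    have h0 := Module.Basis.constr_basis b.toBasis ℝ (fun i => (pP (lam i))⁻¹ • b i) i
    simpa [OrthonormalBasis.coe_toBasis] using h0
  have hPQ : PsiPlus A * Q = 1 := by
    apply ContinuousLinearMap.coe_injective
    apply Module.Basis.ext b.toBasis
    intro i
    simp only [OrthonormalBasis.coe_toBasis]
    show PsiPlus A (Q (b i)) = b i
    rw [hQ i, map_smul, hP i, smul_smul, inv_mul_cancel₀ (pP_pos (lam i)).ne', one_smul]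
  have hQP : Q * PsiPlus A = 1 := by
    apply ContinuousLinearMap.coe_injective
    apply Module.Basis.ext b.toBasis
    intro i
    simp only [OrthonormalBasis.coe_toBasis]
    show Q (PsiPlus A (b i)) = b i
    rw [hP i, map_smul, hQ i, smul_smul, mul_inv_cancel₀ (pP_pos (lam i)).ne', one_smul]
  have hinv : Ring.inverse (PsiPlus A) = Q :=
    Ring.inverse_unit (⟨PsiPlus A, Q, hPQ, hQP⟩ : (V →L[ℝ] V)ˣ)
  have hchi : ∀ i, chi A (b i) = (pM (lam i) * (pP (lam i))⁻¹) • b i := by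
    intro i
    show PsiMinus A (Ring.inverse (PsiPlus A) (b i)) = _
    rw [hinv, hQ i, map_smul, hM i, smul_smul, mul_comm]
  obtain ⟨j, hj⟩ : ∃ j, b.repr v j ≠ 0 := by
    by_contra h
    push_neg at h
    apply hv
    have h0 : b.repr v = 0 := by
      ext j; exact h j
    simpa using congrArg b.repr.symm h0
  have hvsum : (∑ i, b.repr v i • b i) = v := b.sum_repr v
  have hkey : (pM (lam j) * (pP (lam j))⁻¹) * b.repr v j = μ * b.repr v j := by
    have h1 : chi A v = ∑ i, (b.repr v i * (pM (lam i) * (pP (lam i))⁻¹)) • b i := by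
      conv_lhs => rw [← hvsum]
      rw [map_sum]
      refine Finset.sum_congr rfl fun i _ => ?_
      rw [map_smul, hchi i, smul_smul]
    have h2 := congrArg (fun w => (inner ℝ (b j) w : ℝ)) hμ
    simp only [h1] at h2
    rw [b.orthonormal.inner_right_fintype] at h2
    rw [real_inner_smul_right, ← OrthonormalBasis.repr_apply_apply] at h2
    rw [← h2]
    ring
  have hkey' : (pM (lam j) * (pP (lam j))⁻¹) * b.repr v j = μ * b.repr v j := hkey
  have hmu : μ = pM (lam j) * (pP (lam j))⁻¹ := (mul_right_cancel₀ hj hkey').symm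
  have habs : |μ| < 1 := by
    rw [hmu, abs_mul, abs_inv, abs_of_pos (pP_pos (lam j))]
    rw [← div_eq_mul_inv, div_lt_one (pP_pos (lam j))]
    exact abs_pM_lt (lam j)
  exact abs_lt.1 habs
end

section
/- Let V be a finite-dimensional real inner product space and A a self-adjoint linear endomorphism of V. Then ‖χ(A) w‖ ≤ ‖w‖ for all w ∈ V, where χ(A) := Ψ⁻(A) ∘ Ψ⁺(A)⁻¹. -/
open scoped RealInnerProductSpace

/-- scalar series `Σ t^{2n}/(2n+1)!` -/
noncomputable def fpAux (t : ℝ) : ℝ := ∑' n : ℕ, (((2 * n + 1).factorial : ℝ))⁻¹ * t ^ (2 * n)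

/-- scalar series `Σ t^{2n+1}/(2n+2)!` -/
noncomputable def fmAux (t : ℝ) : ℝ := ∑' n : ℕ, (((2 * n + 2).factorial : ℝ))⁻¹ * t ^ (2 * n + 1)

lemma summable_fp (t : ℝ) :
    Summable fun n : ℕ => (((2 * n + 1).factorial : ℝ))⁻¹ * t ^ (2 * n) := by
  have h : Summable ((fun k : ℕ => |t| ^ k / k.factorial) ∘ fun n => 2 * n) :=
    (Real.summable_pow_div_factorial |t|).comp_injective fun a b hab => by omega
  refine Summable.of_norm (h.of_nonneg_of_le (fun n => norm_nonneg _) fun n => ?_)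
  simp only [Function.comp, norm_mul, norm_inv, norm_pow, Real.norm_eq_abs]
  rw [Nat.abs_cast, div_eq_inv_mul]
  refine mul_le_mul_of_nonneg_right ?_ (by positivity)
  refine inv_anti₀ (by exact_mod_cast Nat.factorial_pos _) ?_
  exact_mod_cast Nat.factorial_le (by omega)

lemma summable_fm (t : ℝ) :
    Summable fun n : ℕ => (((2 * n + 2).factorial : ℝ))⁻¹ * t ^ (2 * n + 1) := by
  have h : Summable ((fun k : ℕ => |t| ^ k / k.factorial) ∘ fun n => 2 * n + 1) :=
    (Real.summable_pow_div_factorial |t|).comp_injective fun a b hab => by omega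
  refine Summable.of_norm (h.of_nonneg_of_le (fun n => norm_nonneg _) fun n => ?_)
  simp only [Function.comp, norm_mul, norm_inv, norm_pow, Real.norm_eq_abs]
  rw [Nat.abs_cast, div_eq_inv_mul]
  refine mul_le_mul_of_nonneg_right ?_ (by positivity)
  refine inv_anti₀ (by exact_mod_cast Nat.factorial_pos _) ?_
  exact_mod_cast Nat.factorial_le (by omega)

lemma fp_ge_one (t : ℝ) : 1 ≤ fpAux t := by
  have h := Summable.le_tsum (summable_fp t) 0 (fun j _ => by rw [pow_mul]; positivity)
  simpa [fpAux] using h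

lemma fp_pos (t : ℝ) : 0 < fpAux t := lt_of_lt_of_le one_pos (fp_ge_one t)

lemma mul_fp (t : ℝ) (ht : 0 < t) : t * fpAux t = Real.sinh t := by
  rw [fpAux, ← tsum_mul_left, Real.sinh_eq_tsum]
  exact tsum_congr fun n => by field_simp; ring

lemma mul_fm (t : ℝ) (ht : 0 < t) : t * fmAux t = Real.cosh t - 1 := by
  rw [fmAux, ← tsum_mul_left]
  have hc := (Real.hasSum_cosh t).tsum_eq
  have hz := Summable.tsum_eq_zero_add (Real.hasSum_cosh t).summable
  have he : ∀ n : ℕ, t ^ (2 * (n + 1)) / ((2 * (n + 1)).factorial : ℝ)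
      = t * ((((2 * n + 2).factorial : ℝ))⁻¹ * t ^ (2 * n + 1)) := by
    intro n
    have h2 : 2 * (n + 1) = 2 * n + 2 := by ring
    rw [h2]
    field_simp
    ring
  rw [hc] at *
  rw [tsum_congr he] at hz
  simp only [pow_zero, mul_zero, Nat.factorial_zero] at hz
  linarith [hz]

lemma fm_le_fp (t : ℝ) (ht : 0 ≤ t) : fmAux t ≤ fpAux t := by
  rcases eq_or_lt_of_le ht with h | h
  · have : fmAux t = 0 := by
      rw [fmAux, ← h]
      simp
    rw [this]; linarith [fp_ge_one t]
  · have h1 : t * fmAux t ≤ t * fpAux t := by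
      rw [mul_fp t h, mul_fm t h]
      have := Real.cosh_sub_sinh t
      have h2 : Real.exp (-t) ≤ 1 := Real.exp_le_one_iff.mpr (by linarith)
      linarith
    exact le_of_mul_le_mul_left h1 h

lemma abs_fm_le_fp (t : ℝ) : |fmAux t| ≤ fpAux t := by
  have h1 : |fmAux t| ≤ fmAux |t| := by
    have hnorm : ∀ n : ℕ, ‖(((2 * n + 2).factorial : ℝ))⁻¹ * t ^ (2 * n + 1)‖
        = (((2 * n + 2).factorial : ℝ))⁻¹ * |t| ^ (2 * n + 1) := by
      intro n
      rw [norm_mul, norm_inv, norm_pow, Real.norm_eq_abs, Real.norm_eq_abs, Nat.abs_cast]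
    have hs : Summable fun n : ℕ => ‖(((2 * n + 2).factorial : ℝ))⁻¹ * t ^ (2 * n + 1)‖ :=
      (summable_fm |t|).congr fun n => (hnorm n).symm
    calc |fmAux t| = ‖∑' n : ℕ, (((2 * n + 2).factorial : ℝ))⁻¹ * t ^ (2 * n + 1)‖ := by
          rw [fmAux, Real.norm_eq_abs]
      _ ≤ ∑' n : ℕ, ‖(((2 * n + 2).factorial : ℝ))⁻¹ * t ^ (2 * n + 1)‖ :=
          norm_tsum_le_tsum_norm hs
      _ = fmAux |t| := tsum_congr hnorm
  have h2 : fpAux |t| = fpAux t := by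
    rw [fpAux, fpAux]
    refine tsum_congr fun n => ?_
    rw [pow_mul, pow_mul, sq_abs]
  calc |fmAux t| ≤ fmAux |t| := h1
    _ ≤ fpAux |t| := fm_le_fp _ (abs_nonneg t)
    _ = fpAux t := h2

lemma clm_norm_pow_le {V : Type*} [NormedAddCommGroup V] [NormedSpace ℝ V]
    (A : V →L[ℝ] V) (m : ℕ) : ‖A ^ m‖ ≤ ‖A‖ ^ m := by
  cases m with
  | zero => simpa [ContinuousLinearMap.one_def] using ContinuousLinearMap.norm_id_le (E := V)
  | succ k => exact norm_pow_le' A k.succ_pos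

lemma summable_opPlus {V : Type*} [NormedAddCommGroup V] [NormedSpace ℝ V] [CompleteSpace V]
    (A : V →L[ℝ] V) :
    Summable fun n : ℕ => (((2 * n + 1).factorial : ℝ))⁻¹ • A ^ (2 * n) := by
  have h : Summable ((fun k : ℕ => ‖A‖ ^ k / k.factorial) ∘ fun n => 2 * n) :=
    (Real.summable_pow_div_factorial ‖A‖).comp_injective fun a b hab => by omega
  refine Summable.of_norm (h.of_nonneg_of_le (fun n => norm_nonneg _) fun n => ?_)
  simp only [Function.comp]
  have hsm := norm_smul (((2 * n + 1).factorial : ℝ) : ℝ)⁻¹ (A ^ (2 * n))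
  rw [hsm, norm_inv, Real.norm_eq_abs, Nat.abs_cast, div_eq_inv_mul]
  have h1 : (((2 * n + 1).factorial : ℝ))⁻¹ ≤ (((2 * n).factorial : ℝ))⁻¹ :=
    inv_anti₀ (by exact_mod_cast Nat.factorial_pos _)
      (by exact_mod_cast Nat.factorial_le (by omega))
  exact mul_le_mul h1 (clm_norm_pow_le A _) (norm_nonneg _) (by positivity)

lemma summable_opMinus {V : Type*} [NormedAddCommGroup V] [NormedSpace ℝ V] [CompleteSpace V]
    (A : V →L[ℝ] V) :
    Summable fun n : ℕ => (((2 * n + 2).factorial : ℝ))⁻¹ • A ^ (2 * n + 1) := by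
  have h : Summable ((fun k : ℕ => ‖A‖ ^ k / k.factorial) ∘ fun n => 2 * n + 1) :=
    (Real.summable_pow_div_factorial ‖A‖).comp_injective fun a b hab => by omega
  refine Summable.of_norm (h.of_nonneg_of_le (fun n => norm_nonneg _) fun n => ?_)
  simp only [Function.comp]
  have hsm := norm_smul (((2 * n + 2).factorial : ℝ) : ℝ)⁻¹ (A ^ (2 * n + 1))
  rw [hsm, norm_inv, Real.norm_eq_abs, Nat.abs_cast, div_eq_inv_mul]
  have h1 : (((2 * n + 2).factorial : ℝ))⁻¹ ≤ (((2 * n + 1).factorial : ℝ))⁻¹ :=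
    inv_anti₀ (by exact_mod_cast Nat.factorial_pos _)
      (by exact_mod_cast Nat.factorial_le (by omega))
  exact mul_le_mul h1 (clm_norm_pow_le A _) (norm_nonneg _) (by positivity)

/-- If `A` is a self-adjoint endomorphism of a finite-dimensional real inner product space,
then `χ(A) := Ψ⁻(A) ∘ Ψ⁺(A)⁻¹` is a contraction: `‖χ(A) w‖ ≤ ‖w‖` for all `w`. -/
theorem chi_norm_le {V : Type*} [NormedAddCommGroup V]
    [InnerProductSpace ℝ V] [FiniteDimensional ℝ V] (A : V →L[ℝ] V)
    (hA : ∀ x y : V, ⟪A x, y⟫ = ⟪x, A y⟫) :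
    ∀ w : V, ‖chi A w‖ ≤ ‖w‖ := by
  intro w
  classical
  have hA' : (A : V →ₗ[ℝ] V).IsSymmetric := fun x y => hA x y
  set n := Module.finrank ℝ V with hn
  let b : OrthonormalBasis (Fin n) ℝ V := hA'.eigenvectorBasis rfl
  let μ : Fin n → ℝ := hA'.eigenvalues rfl
  have hbA : ∀ i, A (b i) = μ i • b i := fun i => hA'.apply_eigenvectorBasis rfl i
  have hpow : ∀ (k : ℕ) (i : Fin n), (A ^ k) (b i) = μ i ^ k • b i := by
    intro k i
    induction k with
    | zero => simp
    | succ m ih =>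
      rw [pow_succ, ContinuousLinearMap.mul_apply, hbA i, map_smul, ih, smul_smul]
      congr 1
      ring
  have happ : ∀ i, PsiPlus A (b i) = fpAux (μ i) • b i := by
    intro i
    have h := (ContinuousLinearMap.apply ℝ V (b i)).map_tsum (summable_opPlus A)
    simp only [ContinuousLinearMap.apply_apply] at h
    rw [PsiPlus, h,
      tsum_congr fun k => by
        rw [ContinuousLinearMap.smul_apply, hpow, smul_smul],
      Summable.tsum_smul_const (summable_fp (μ i))]
    rfl
  have happm : ∀ i, PsiMinus A (b i) = (-(fmAux (μ i))) • b i := by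
    intro i
    have h := (ContinuousLinearMap.apply ℝ V (b i)).map_tsum (summable_opMinus A)
    simp only [ContinuousLinearMap.apply_apply] at h
    rw [PsiMinus, ContinuousLinearMap.neg_apply, h,
      tsum_congr fun k => by
        rw [ContinuousLinearMap.smul_apply, hpow, smul_smul],
      Summable.tsum_smul_const (summable_fm (μ i)), ← neg_smul]
    rfl
  let Binv : V →L[ℝ] V :=
    LinearMap.toContinuousLinearMap (b.toBasis.constr ℝ fun i => (fpAux (μ i))⁻¹ • b i)
  have hBinv : ∀ i, Binv (b i) = (fpAux (μ i))⁻¹ • b i := by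
    intro i
    have h := b.toBasis.constr_basis ℝ (fun i => (fpAux (μ i))⁻¹ • b i) i
    rw [OrthonormalBasis.coe_toBasis] at h
    simpa [Binv] using h
  have hext : ∀ f g : V →L[ℝ] V, (∀ i, f (b i) = g (b i)) → f = g := by
    intro f g h
    apply ContinuousLinearMap.coe_injective
    apply b.toBasis.ext
    intro i
    simpa [OrthonormalBasis.coe_toBasis] using h i
  have hfp0 : ∀ i, fpAux (μ i) ≠ 0 := fun i => ne_of_gt (fp_pos _)
  have hPB : PsiPlus A * Binv = 1 := hext _ _ fun i => by
    rw [ContinuousLinearMap.mul_apply, hBinv, map_smul, happ, smul_smul,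
      inv_mul_cancel₀ (hfp0 i), one_smul, ContinuousLinearMap.one_apply]
  have hBP : Binv * PsiPlus A = 1 := hext _ _ fun i => by
    rw [ContinuousLinearMap.mul_apply, happ, map_smul, hBinv, smul_smul,
      mul_inv_cancel₀ (hfp0 i), one_smul, ContinuousLinearMap.one_apply]
  have hinv : Ring.inverse (PsiPlus A) = Binv :=
    Ring.inverse_unit ⟨PsiPlus A, Binv, hPB, hBP⟩
  let c : Fin n → ℝ := fun i => -(fmAux (μ i)) * (fpAux (μ i))⁻¹
  have hchi : ∀ i, chi A (b i) = c i • b i := by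
    intro i
    rw [chi, hinv, ContinuousLinearMap.mul_apply, hBinv, map_smul, happm, smul_smul]
    congr 1
    simp [c, mul_comm]
  have hc : ∀ i, |c i| ≤ 1 := by
    intro i
    have hfp := fp_pos (μ i)
    rw [abs_mul, abs_neg, abs_inv, abs_of_pos hfp, ← div_eq_mul_inv, div_le_one hfp]
    exact abs_fm_le_fp (μ i)
  have hrepr : ∀ i, b.repr (chi A w) i = c i * b.repr w i := by
    intro i
    conv_lhs => rw [← b.sum_repr w]
    rw [map_sum, map_sum]
    simp only [map_smul, hchi, smul_smul, OrthonormalBasis.repr_self]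
    calc (∑ x, (b.repr w x * c x) • EuclideanSpace.single x (1:ℝ)) i
        = EuclideanSpace.proj (𝕜 := ℝ) i
            (∑ x, (b.repr w x * c x) • EuclideanSpace.single x (1:ℝ)) := rfl
      _ = ∑ x, EuclideanSpace.proj (𝕜 := ℝ) i
            ((b.repr w x * c x) • EuclideanSpace.single x (1:ℝ)) := map_sum _ _ _
      _ = c i * b.repr w i := by simp [EuclideanSpace.single_apply, mul_comm]
  rw [← b.repr.norm_map (chi A w), ← b.repr.norm_map w,
    EuclideanSpace.norm_eq, EuclideanSpace.norm_eq]
  apply Real.sqrt_le_sqrt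
  apply Finset.sum_le_sum
  intro i _
  rw [hrepr i]
  simp only [Real.norm_eq_abs, abs_mul]
  have h1 : |c i| * |b.repr w i| ≤ |b.repr w i| := by
    calc |c i| * |b.repr w i| ≤ 1 * |b.repr w i| :=
          mul_le_mul_of_nonneg_right (hc i) (abs_nonneg _)
      _ = |b.repr w i| := one_mul _
  exact pow_le_pow_left₀ (by positivity) h1 2
end

section
/- Let V be a finite-dimensional real inner product space and A a self-adjoint linear endomorphism of V. Then for every w ∈ V, ⟨((exp(A) + exp(−A))/2) w, w⟩ − ⟨w, w⟩ ≥ (1/2)‖A w‖², where exp denotes the exponential of endomorphisms. -/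
open scoped RealInnerProductSpace

set_option synthInstance.maxHeartbeats 1000000 in
/-- For a self-adjoint endomorphism `A` of a finite-dimensional real inner product space
and every `w`, `⟨cosh(A) w, w⟩ − ⟨w, w⟩ ≥ (1/2)‖A w‖²`, where
`cosh(A) = (exp(A) + exp(−A))/2`. -/
theorem inner_cosh_sub_inner_ge {V : Type*} [NormedAddCommGroup V]
    [InnerProductSpace ℝ V] [FiniteDimensional ℝ V] (A : V →L[ℝ] V)
    (hA : ∀ x y : V, ⟪A x, y⟫ = ⟪x, A y⟫) :
    ∀ w : V,
      ⟪(((1 : ℝ) / 2) • (NormedSpace.exp A + NormedSpace.exp (-A))) w, w⟫ - ⟪w, w⟫ ≥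
        (1 / 2) * ‖A w‖ ^ 2 := by
  intro w
  -- powers of A are symmetric
  have hpow : ∀ (n : ℕ) (x y : V), ⟪(A ^ n) x, y⟫ = ⟪x, (A ^ n) y⟫ := by
    intro n
    induction n with
    | zero => simp
    | succ n ih =>
      intro x y
      conv_lhs => rw [pow_succ]
      conv_rhs => rw [pow_succ']
      simp only [ContinuousLinearMap.mul_apply]
      rw [ih, hA]
  -- the summed function
  set f : ℕ → ℝ := fun n => ((n.factorial : ℝ)⁻¹) * ⟪(A ^ n) w, w⟫ with hf
  set g : ℕ → ℝ := fun n => ((n.factorial : ℝ)⁻¹) * ⟪((-A) ^ n) w, w⟫ with hg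
  have hFs : HasSum (fun n : ℕ => ((n.factorial : ℝ)⁻¹) • (A ^ n)) (NormedSpace.exp A) :=
    NormedSpace.exp_series_hasSum_exp' A
  have hGs : HasSum (fun n : ℕ => ((n.factorial : ℝ)⁻¹) • ((-A) ^ n)) (NormedSpace.exp (-A)) :=
    NormedSpace.exp_series_hasSum_exp' (-A)
  -- evaluate at w, then inner with w
  have evalw : (V →L[ℝ] V) →L[ℝ] V := ContinuousLinearMap.apply ℝ V w
  have hF : HasSum f ⟪(NormedSpace.exp A) w, w⟫ := by
    have h1 := hFs.mapL (ContinuousLinearMap.apply ℝ V w)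
    have h2 := h1.mapL (innerSL ℝ w)
    simpa [hf, real_inner_comm, mul_comm, real_inner_smul_right] using h2
  have hG : HasSum g ⟪(NormedSpace.exp (-A)) w, w⟫ := by
    have h1 := hGs.mapL (ContinuousLinearMap.apply ℝ V w)
    have h2 := h1.mapL (innerSL ℝ w)
    simpa [hg, real_inner_comm, mul_comm, real_inner_smul_right] using h2
  -- combine: average is supported on even indices
  have hFG : HasSum (fun n => (f n + g n) / 2)
      ((⟪(NormedSpace.exp A) w, w⟫ + ⟪(NormedSpace.exp (-A)) w, w⟫) / 2) := by
    simpa [div_eq_mul_inv, add_mul] using (hF.add hG).mul_right (2:ℝ)⁻¹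
  have hgf : ∀ n, g n = (-1 : ℝ) ^ n * f n := by
    intro n
    have h1 : (-A) = (-1 : ℝ) • A := by simp
    simp only [hg, hf, h1, smul_pow, ContinuousLinearMap.smul_apply, real_inner_smul_left]
    ring
  have hodd : ∀ n ∉ Set.range (fun k : ℕ => 2 * k), (f n + g n) / 2 = 0 := by
    intro n hn
    have : ¬ Even n := by
      simpa [Even, Set.range, eq_comm, two_mul] using hn
    have hno : Odd n := Nat.not_even_iff_odd.mp this
    rw [hgf n, Odd.neg_one_pow hno]
    ring
  have hinj : Function.Injective (fun k : ℕ => 2 * k) := mul_right_injective₀ two_ne_zero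
  have hEven : HasSum (fun k : ℕ => (f (2 * k) + g (2 * k)) / 2)
      ((⟪(NormedSpace.exp A) w, w⟫ + ⟪(NormedSpace.exp (-A)) w, w⟫) / 2) :=
    (Function.Injective.hasSum_iff hinj hodd).mpr hFG
  have hsimp : ∀ k, (f (2 * k) + g (2 * k)) / 2 = f (2 * k) := by
    intro k
    rw [hgf, Even.neg_one_pow ⟨k, two_mul k⟩]
    ring
  have hEven' : HasSum (fun k : ℕ => f (2 * k))
      ((⟪(NormedSpace.exp A) w, w⟫ + ⟪(NormedSpace.exp (-A)) w, w⟫) / 2) := by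
    simpa only [hsimp] using hEven
  -- terms are nonnegative
  have hterm : ∀ k, f (2 * k) = (((2 * k).factorial : ℝ)⁻¹) * ⟪(A ^ k) w, (A ^ k) w⟫ := by
    intro k
    have : (A ^ (2 * k)) w = (A ^ k) ((A ^ k) w) := by
      rw [two_mul, pow_add]; rfl
    rw [hf]
    simp only [this]
    rw [← hpow k]
  have hnn : ∀ k, 0 ≤ f (2 * k) := by
    intro k
    rw [hterm]
    exact mul_nonneg (by positivity) real_inner_self_nonneg
  -- the partial sum over {0, 1} is a lower bound
  have hle : f 0 + f (2 * 1) ≤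
      (⟪(NormedSpace.exp A) w, w⟫ + ⟪(NormedSpace.exp (-A)) w, w⟫) / 2 := by
    have := sum_le_hasSum {0, 1} (fun k _ => hnn k) hEven'
    simpa using this
  have hf0 : f 0 = ⟪w, w⟫ := by simp [hf]
  have hf2 : f (2 * 1) = (1 / 2) * ‖A w‖ ^ 2 := by
    rw [hterm, real_inner_self_eq_norm_sq]
    norm_num [Nat.factorial]
  have hLHS : ⟪(((1 : ℝ) / 2) • (NormedSpace.exp A + NormedSpace.exp (-A))) w, w⟫
      = (⟪(NormedSpace.exp A) w, w⟫ + ⟪(NormedSpace.exp (-A)) w, w⟫) / 2 := by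
    simp [ContinuousLinearMap.smul_apply, ContinuousLinearMap.add_apply,
      real_inner_smul_left, inner_add_left]
    ring
  rw [hLHS, ge_iff_le, ← hf2, ← hf0]
  linarith [hle]
end

section
/- Let g be a finite-dimensional real Lie algebra equipped with an inner product ⟨·,·⟩, and suppose g = k ⊕ p is an orthogonal direct sum of subspaces with [k,k] ⊆ k, [p,p] ⊆ k and [k,p] ⊆ p. Let z₀ ∈ k with ad(z₀) skew-adjoint, and let Z ∈ p with ad(Z) self-adjoint and [z₀,[z₀,Z]] = −Z. Then ⟨exp(−ad(Z)) z₀, z₀⟩ − ⟨z₀, z₀⟩ ≥ (1/2)⟨Z, Z⟩, where exp denotes the exponential of endomorphisms. -/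
open scoped RealInnerProductSpace

/-- Lemma 4.2 of the paper: if `g = k ⊕ p` is an orthogonal decomposition of a
finite-dimensional real Lie algebra `g` (with Lie bracket the bilinear map `br`
satisfying the alternating and Jacobi identities) equipped with an inner product,
with `[k,k] ⊆ k`, `[p,p] ⊆ k`, `[k,p] ⊆ p`, if `z₀ ∈ k` has skew-adjoint `ad` and
`Z ∈ p` has self-adjoint `ad` and satisfies `[z₀,[z₀,Z]] = −Z`,
then `⟨exp(−ad Z) z₀, z₀⟩ − ⟨z₀, z₀⟩ ≥ (1/2)⟨Z, Z⟩`. -/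
theorem exp_neg_ad_inner_ge {L : Type*}
    [NormedAddCommGroup L] [InnerProductSpace ℝ L] [FiniteDimensional ℝ L]
    (br : L →ₗ[ℝ] L →ₗ[ℝ] L)
    (halt : ∀ x : L, br x x = 0)
    (hjac : ∀ x y z : L, br x (br y z) = br (br x y) z + br y (br x z))
    (k p : Submodule ℝ L) (hcompl : IsCompl k p)
    (horth : ∀ x ∈ k, ∀ y ∈ p, ⟪x, y⟫ = 0)
    (hkk : ∀ x ∈ k, ∀ y ∈ k, br x y ∈ k)
    (hpp : ∀ x ∈ p, ∀ y ∈ p, br x y ∈ k)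
    (hkp : ∀ x ∈ k, ∀ y ∈ p, br x y ∈ p)
    (z₀ : L) (hz₀ : z₀ ∈ k)
    (hz₀skew : ∀ x y : L, ⟪br z₀ x, y⟫ = -⟪x, br z₀ y⟫)
    (Z : L) (hZ : Z ∈ p)
    (hZsa : ∀ x y : L, ⟪br Z x, y⟫ = ⟪x, br Z y⟫)
    (hzzZ : br z₀ (br z₀ Z) = -Z) :
    ⟪NormedSpace.exp (-(LinearMap.toContinuousLinearMap (br Z))) z₀, z₀⟫ - ⟪z₀, z₀⟫ ≥
      (1 / 2) * ⟪Z, Z⟫ := by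
  set T : L →L[ℝ] L := LinearMap.toContinuousLinearMap (br Z) with hTdef
  have hTapp : ∀ x : L, T x = br Z x := fun x => rfl
  -- antisymmetry of the bracket
  have hanti : ∀ x y : L, br x y = - br y x := by
    intro x y
    have h := halt (x + y)
    simp only [map_add, LinearMap.add_apply, halt x, halt y, zero_add, add_zero] at h
    exact eq_neg_of_add_eq_zero_left (add_comm ((br y) x) ((br x) y) ▸ h)
  -- grading: T sends k to p and p to k
  have hTk : ∀ x ∈ k, T x ∈ p := by
    intro x hx
    rw [hTapp, hanti Z x]
    exact Submodule.neg_mem _ (hkp x hx Z hZ)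
  have hTp : ∀ x ∈ p, T x ∈ k := fun x hx => hpp Z hZ x hx
  -- powers of T are self-adjoint
  have hpowsa : ∀ (n : ℕ) (x y : L), ⟪(T ^ n) x, y⟫ = ⟪x, (T ^ n) y⟫ := by
    intro n
    induction n with
    | zero => intro x y; simp
    | succ n ih =>
      intro x y
      have h1 : (T ^ (n + 1)) x = (T ^ n) (T x) := by
        rw [pow_succ]; rfl
      have h2 : (T ^ (n + 1)) y = T ((T ^ n) y) := by
        rw [pow_succ']; rfl
      rw [h1, h2, ih (T x) y, hTapp, hTapp, hZsa]
  -- odd powers of T send z₀ into p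
  have hodd : ∀ n : ℕ, (T ^ (2 * n + 1)) z₀ ∈ p := by
    intro n
    induction n with
    | zero => simpa using hTk z₀ hz₀
    | succ n ih =>
      have h : (T ^ (2 * (n + 1) + 1)) z₀ = T (T ((T ^ (2 * n + 1)) z₀)) := by
        rw [show 2 * (n + 1) + 1 = (2 * n + 1) + 1 + 1 from by ring, pow_succ', pow_succ']
        rfl
      rw [h]
      exact hTk _ (hTp _ ih)
  -- the series term
  set f : ℕ → ℝ := fun n => (n.factorial : ℝ)⁻¹ * ⟪((-T) ^ n) z₀, z₀⟫ with hfdef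
  have hf_odd : ∀ n : ℕ, Odd n → f n = 0 := by
    rintro _ ⟨m, rfl⟩
    have hne : (2 * m + 1) = 2 * m + 1 := rfl
    have hmem := hodd m
    have : ⟪(T ^ (2 * m + 1)) z₀, z₀⟫ = 0 := by
      rw [real_inner_comm]
      exact horth z₀ hz₀ _ hmem
    simp only [hfdef]
    rw [Odd.neg_pow ⟨m, by ring⟩ T]
    simp only [ContinuousLinearMap.neg_apply, inner_neg_left, this, neg_zero, mul_zero]
  have hf_even : ∀ m : ℕ, f (2 * m) = ((2 * m).factorial : ℝ)⁻¹ * ⟪(T ^ m) z₀, (T ^ m) z₀⟫ := by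
    intro m
    have h1 : ((-T) ^ (2 * m)) = T ^ (2 * m) := Even.neg_pow ⟨m, by ring⟩ T
    have h2 : (T ^ (2 * m)) z₀ = (T ^ m) ((T ^ m) z₀) := by
      rw [two_mul, pow_add]; rfl
    simp only [hfdef, h1, h2, hpowsa m]
  have hf_nonneg : ∀ n : ℕ, 0 ≤ f n := by
    intro n
    rcases Nat.even_or_odd n with ⟨m, rfl⟩ | ho
    · rw [show m + m = 2 * m from (two_mul m).symm, hf_even m]
      exact mul_nonneg (by positivity) real_inner_self_nonneg
    · rw [hf_odd n ho]
  -- values at 0 and 2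
  have hf0 : f 0 = ⟪z₀, z₀⟫ := by simp [hfdef]
  have hTz : T z₀ = - br z₀ Z := by rw [hTapp, hanti Z z₀]
  have hTzZ : ⟪T z₀, T z₀⟫ = ⟪Z, Z⟫ := by
    rw [hTz, inner_neg_neg, hz₀skew Z (br z₀ Z), hzzZ, inner_neg_right, neg_neg]
  have hf2 : f 2 = (1 / 2) * ⟪Z, Z⟫ := by
    have := hf_even 1
    rw [show 2 * 1 = 2 from rfl] at this
    rw [this, pow_one, hTzZ]
    norm_num
  -- summability and the tsum expression for the exponential
  have hsummCLM : Summable fun n : ℕ => ((n.factorial : ℝ)⁻¹ : ℝ) • (-T) ^ n :=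
    NormedSpace.expSeries_summable' (𝕂 := ℝ) (-T)
  have hsumL : Summable fun n : ℕ => ((n.factorial : ℝ)⁻¹ : ℝ) • ((-T) ^ n) z₀ := by
    have := hsummCLM.map (ContinuousLinearMap.apply ℝ L z₀)
      (ContinuousLinearMap.apply ℝ L z₀).continuous
    refine this.congr fun n => ?_
    simp only [Function.comp_apply, ContinuousLinearMap.apply_apply, ContinuousLinearMap.smul_apply]
  have hsumf : Summable f := by
    have := hsumL.map (innerSL ℝ z₀) (innerSL ℝ z₀).continuous
    refine this.congr fun n => ?_
    simp only [Function.comp, hfdef, innerSL_apply_apply, inner_smul_right]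
    rw [real_inner_comm]
  have hexp : ⟪NormedSpace.exp (-T) z₀, z₀⟫ = ∑' n, f n := by
    rw [NormedSpace.exp_eq_tsum ℝ]
    have h1 : (∑' n : ℕ, ((n.factorial : ℝ)⁻¹ : ℝ) • (-T) ^ n) z₀
        = ∑' n : ℕ, ((n.factorial : ℝ)⁻¹ : ℝ) • ((-T) ^ n) z₀ := by
      have := (ContinuousLinearMap.apply ℝ L z₀).map_tsum hsummCLM
      simpa only [ContinuousLinearMap.apply_apply, ContinuousLinearMap.smul_apply] using this
    rw [h1]
    have h2 := (innerSL ℝ z₀).map_tsum hsumL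
    calc ⟪∑' n : ℕ, ((n.factorial : ℝ)⁻¹ : ℝ) • ((-T) ^ n) z₀, z₀⟫
        = (innerSL ℝ z₀) (∑' n : ℕ, ((n.factorial : ℝ)⁻¹ : ℝ) • ((-T) ^ n) z₀) := by
          rw [innerSL_apply_apply, real_inner_comm]
      _ = ∑' n : ℕ, (innerSL ℝ z₀) (((n.factorial : ℝ)⁻¹ : ℝ) • ((-T) ^ n) z₀) := h2
      _ = ∑' n, f n := by
          refine tsum_congr fun n => ?_
          simp only [hfdef, innerSL_apply_apply, inner_smul_right]
          rw [real_inner_comm]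
  -- compare with the finite sum over {0, 2}
  have hle : f 0 + f 2 ≤ ∑' n, f n := by
    have := Summable.sum_le_tsum ({0, 2} : Finset ℕ) (fun i _ => hf_nonneg i) hsumf
    simpa using this
  rw [ge_iff_le, hexp]
  rw [hf0, hf2] at hle
  linarith
end

section
/- Let g be a finite-dimensional real Lie algebra equipped with an inner product ⟨·,·⟩. Let z₀, Z ∈ g be such that ad(Z) is self-adjoint, ad(z₀) is skew-adjoint, and [z₀,[z₀,Z]] = −Z. Then ⟨z₀, [[z₀,Z],Z]⟩ = ⟨Z, Z⟩. -/
open scoped RealInnerProductSpace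

/-- Lemma 4.3 of the paper: in a finite-dimensional real Lie algebra (with Lie bracket
the bilinear map `br` satisfying the alternating and Jacobi identities) equipped with an
inner product, if `ad Z` is self-adjoint, `ad z₀` is skew-adjoint and
`[z₀,[z₀,Z]] = −Z`, then `⟨z₀, [[z₀,Z],Z]⟩ = ⟨Z, Z⟩`. -/
theorem inner_br_br_eq {L : Type*}
    [NormedAddCommGroup L] [InnerProductSpace ℝ L] [FiniteDimensional ℝ L]
    (br : L →ₗ[ℝ] L →ₗ[ℝ] L)
    (halt : ∀ x : L, br x x = 0)
    (hjac : ∀ x y z : L, br x (br y z) = br (br x y) z + br y (br x z))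
    (z₀ Z : L)
    (hZsa : ∀ x y : L, ⟪br Z x, y⟫ = ⟪x, br Z y⟫)
    (hz₀skew : ∀ x y : L, ⟪br z₀ x, y⟫ = -⟪x, br z₀ y⟫)
    (hzzZ : br z₀ (br z₀ Z) = -Z) :
    ⟪z₀, br (br z₀ Z) Z⟫ = ⟪Z, Z⟫ := by
  have hskew : ∀ x y : L, br x y = -br y x := by
    intro x y
    have h := halt (x + y)
    simp only [map_add, LinearMap.add_apply, halt, zero_add, add_zero] at h
    exact eq_neg_of_add_eq_zero_right h
  calc ⟪z₀, br (br z₀ Z) Z⟫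
      = -⟪z₀, br Z (br z₀ Z)⟫ := by rw [hskew (br z₀ Z) Z]; simp
    _ = -⟪br Z z₀, br z₀ Z⟫ := by rw [hZsa]
    _ = ⟪br z₀ Z, br z₀ Z⟫ := by rw [hskew Z z₀]; simp
    _ = -⟪Z, br z₀ (br z₀ Z)⟫ := by rw [hz₀skew]
    _ = ⟪Z, Z⟫ := by rw [hzzZ]; simp
end
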